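/- Let G be a P5-free graph containing a triangle on vertices v1, v2, v3. For i ∈ {1,2,3}, let Xi be the set of vertices outside the triangle whose unique neighbor in the triangle is vi, and let L be the set of vertices with no neighbor in the triangle. If some vertex t ∈ L has a neighbor in X1, then t is adjacent to every vertex of X2 ∪ X3, and moreover every vertex of X1 is adjacent to every vertex of X2 ∪ X3. -/

import Mathlib

open SimpleGraph

/-- The complete graph on 5 vertices minus one edge. -/
def K5e : SimpleGraph (Fin 5) := (⊤ : SimpleGraph (Fin 5)).deleteEdges {s(0, 1)}

/-- `H` has an induced copy in `G`. -/
def HasInducedCopy {W V : Type*} (H : SimpleGraph W) (G : SimpleGraph V) : Prop :=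
  ∃ f : W ↪ V, ∀ a b : W, G.Adj (f a) (f b) ↔ H.Adj a b

/-- `G` contains no induced subgraph isomorphic to `H`. -/
def IsInducedFree {V W : Type*} (G : SimpleGraph V) (H : SimpleGraph W) : Prop :=
  ¬ HasInducedCopy H G

lemma noP5 {V : Type*} (G : SimpleGraph V) (hG : IsInducedFree G (pathGraph 5))
    (a b c d e : V) (hab : G.Adj a b) (hbc : G.Adj b c) (hcd : G.Adj c d) (hde : G.Adj d e)
    (hac : ¬G.Adj a c) (had : ¬G.Adj a d) (hae : ¬G.Adj a e)
    (hbd : ¬G.Adj b d) (hbe : ¬G.Adj b e) (hce : ¬G.Adj c e) : False := by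
  apply hG
  have n1 : a ≠ b := hab.ne
  have n2 : b ≠ c := hbc.ne
  have n3 : c ≠ d := hcd.ne
  have n4 : d ≠ e := hde.ne
  have n5 : a ≠ c := fun h => had (h ▸ hcd)
  have n6 : a ≠ d := fun h => hbd (h ▸ hab).symm
  have n7 : a ≠ e := fun h => had ((h ▸ hde).symm)
  have n8 : b ≠ d := fun h => hbe (h ▸ hde)
  have n9 : b ≠ e := fun h => hae (h ▸ hab)
  have n10 : c ≠ e := fun h => hbe (h ▸ hbc)
  have m1 := n1.symm; have m2 := n2.symm; have m3 := n3.symm; have m4 := n4.symm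
  have m5 := n5.symm; have m6 := n6.symm; have m7 := n7.symm; have m8 := n8.symm
  have m9 := n9.symm; have m10 := n10.symm
  have inj : Function.Injective ![a,b,c,d,e] := by
    intro i j hij
    fin_cases i <;> fin_cases j <;> simp_all
  refine ⟨⟨![a,b,c,d,e], inj⟩, ?_⟩
  intro i j
  fin_cases i <;> fin_cases j <;>
    first
      | exact iff_of_false G.irrefl (by rw [pathGraph_adj]; decide)
      | exact iff_of_true hab (by rw [pathGraph_adj]; decide)
      | exact iff_of_true hab.symm (by rw [pathGraph_adj]; decide)
      | exact iff_of_true hbc (by rw [pathGraph_adj]; decide)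
      | exact iff_of_true hbc.symm (by rw [pathGraph_adj]; decide)
      | exact iff_of_true hcd (by rw [pathGraph_adj]; decide)
      | exact iff_of_true hcd.symm (by rw [pathGraph_adj]; decide)
      | exact iff_of_true hde (by rw [pathGraph_adj]; decide)
      | exact iff_of_true hde.symm (by rw [pathGraph_adj]; decide)
      | exact iff_of_false hac (by rw [pathGraph_adj]; decide)
      | exact iff_of_false (fun h => hac h.symm) (by rw [pathGraph_adj]; decide)
      | exact iff_of_false had (by rw [pathGraph_adj]; decide)
      | exact iff_of_false (fun h => had h.symm) (by rw [pathGraph_adj]; decide)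
      | exact iff_of_false hae (by rw [pathGraph_adj]; decide)
      | exact iff_of_false (fun h => hae h.symm) (by rw [pathGraph_adj]; decide)
      | exact iff_of_false hbd (by rw [pathGraph_adj]; decide)
      | exact iff_of_false (fun h => hbd h.symm) (by rw [pathGraph_adj]; decide)
      | exact iff_of_false hbe (by rw [pathGraph_adj]; decide)
      | exact iff_of_false (fun h => hbe h.symm) (by rw [pathGraph_adj]; decide)
      | exact iff_of_false hce (by rw [pathGraph_adj]; decide)
      | exact iff_of_false (fun h => hce h.symm) (by rw [pathGraph_adj]; decide)

theorem stmt_7 {V : Type*} (G : SimpleGraph V) (hG : IsInducedFree G (pathGraph 5))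
    (v1 v2 v3 : V) (h12 : G.Adj v1 v2) (h13 : G.Adj v1 v3) (h23 : G.Adj v2 v3)
    (X1 X2 X3 L : Set V)
    (hX1 : X1 = {u | u ∉ ({v1, v2, v3} : Set V) ∧ G.Adj u v1 ∧ ¬ G.Adj u v2 ∧ ¬ G.Adj u v3})
    (hX2 : X2 = {u | u ∉ ({v1, v2, v3} : Set V) ∧ ¬ G.Adj u v1 ∧ G.Adj u v2 ∧ ¬ G.Adj u v3})
    (hX3 : X3 = {u | u ∉ ({v1, v2, v3} : Set V) ∧ ¬ G.Adj u v1 ∧ ¬ G.Adj u v2 ∧ G.Adj u v3})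
    (hL : L = {u | u ∉ ({v1, v2, v3} : Set V) ∧ ¬ G.Adj u v1 ∧ ¬ G.Adj u v2 ∧ ¬ G.Adj u v3})
    (t : V) (ht : t ∈ L) (x : V) (hx : x ∈ X1) (htx : G.Adj t x) :
    (∀ y ∈ X2 ∪ X3, G.Adj t y) ∧ (∀ a ∈ X1, ∀ y ∈ X2 ∪ X3, G.Adj a y) := by
  subst hX1 hX2 hX3 hL
  obtain ⟨-, ht1, ht2, ht3⟩ := ht
  obtain ⟨-, hx1, hx2, hx3⟩ := hx
  -- part 1
  have part1 : ∀ y, y ∈ ({u | u ∉ ({v1, v2, v3} : Set V) ∧ ¬ G.Adj u v1 ∧ G.Adj u v2 ∧ ¬ G.Adj u v3} ∪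
      {u | u ∉ ({v1, v2, v3} : Set V) ∧ ¬ G.Adj u v1 ∧ ¬ G.Adj u v2 ∧ G.Adj u v3} : Set V) → G.Adj t y := by
    rintro y (⟨-, hy1, hy2, hy3⟩ | ⟨-, hy1, hy2, hy3⟩) <;> by_contra hty
    · -- y ∈ X2
      by_cases hxy : G.Adj x y
      · -- t - x - y - v2 - v3
        exact noP5 G hG t x y v2 v3 htx hxy hy2 h23
          hty ht2 ht3 hx2 hx3 hy3
      · -- t - x - v1 - v2 - y
        exact noP5 G hG t x v1 v2 y htx hx1 h12 hy2.symm
          ht1 ht2 hty hx2 hxy (fun (h : G.Adj v1 y) => hy1 h.symm)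
    · -- y ∈ X3
      by_cases hxy : G.Adj x y
      · -- t - x - y - v3 - v2
        exact noP5 G hG t x y v3 v2 htx hxy hy3 h23.symm
          hty ht3 ht2 hx3 hx2 hy2
      · -- t - x - v1 - v3 - y
        exact noP5 G hG t x v1 v3 y htx hx1 h13 hy3.symm
          ht1 ht3 hty hx3 hxy (fun (h : G.Adj v1 y) => hy1 h.symm)
  refine ⟨part1, ?_⟩
  rintro a ⟨-, ha1, ha2, ha3⟩ y hy
  have hty : G.Adj t y := part1 y hy
  by_contra hay
  obtain (⟨-, hy1, hy2, hy3⟩ | ⟨-, hy1, hy2, hy3⟩) := hy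
  · -- y ∈ X2
    by_cases hta : G.Adj t a
    · -- y - t - a - v1 - v3
      exact noP5 G hG y t a v1 v3 hty.symm hta ha1 h13
        (fun h => hay (G.adj_symm h)) hy1 hy3
        ht1 ht3 ha3
    · -- t - y - v2 - v1 - a
      exact noP5 G hG t y v2 v1 a hty hy2 h12.symm ha1.symm
        ht2 ht1 (fun h => hta h) hy1 (fun h => hay (G.adj_symm h)) (fun h => ha2 (G.adj_symm h))
  · -- y ∈ X3
    by_cases hta : G.Adj t a
    · -- y - t - a - v1 - v2
      exact noP5 G hG y t a v1 v2 hty.symm hta ha1 h12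
        (fun h => hay (G.adj_symm h)) hy1 hy2
        ht1 ht2 ha2
    · -- t - y - v3 - v1 - a
      exact noP5 G hG t y v3 v1 a hty hy3 h13.symm ha1.symm
        ht3 ht1 (fun h => hta h) hy1 (fun h => hay (G.adj_symm h)) (fun h => ha3 (G.adj_symm h))
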